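/- Positive definiteness of the deformed metric tensor: let α > 0 and β > 0 be real numbers, v a real number, p ≠ 0, and 2τ = pᵀ A p. Then the matrix G = (1/β) · h + (v/(αβ)) · p pᵀ is positive definite if and only if α + 2τv > 0. -/

import Mathlib

open Matrix

lemma aux_quadform {n : ℕ} (B : Matrix (Fin n) (Fin n) ℝ) (p x : Fin n → ℝ) (a b : ℝ) :
    x ⬝ᵥ (a • B + b • vecMulVec p p) *ᵥ x
      = a * (x ⬝ᵥ B *ᵥ x) + b * (p ⬝ᵥ x) * (p ⬝ᵥ x) := by
  simp only [add_mulVec, smul_mulVec, dotProduct_add, dotProduct_smul, vecMulVec, mulVec,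
    dotProduct, of_apply, Matrix.add_apply, Matrix.smul_apply, Finset.mul_sum, Finset.sum_mul,
    smul_eq_mul]
  rw [← Finset.sum_add_distrib]
  refine Finset.sum_congr rfl fun i _ => ?_
  rw [← Finset.sum_add_distrib]
  refine Finset.sum_congr rfl fun j _ => ?_
  ring

lemma aux_symm {n : ℕ} (A : Matrix (Fin n) (Fin n) ℝ) (hA : A.PosDef) : Aᵀ = A := by
  have := hA.isHermitian
  simpa [Matrix.IsHermitian] using this

lemma aux_cross {n : ℕ} (A : Matrix (Fin n) (Fin n) ℝ) (hA : A.PosDef) (p x : Fin n → ℝ) :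
    (A *ᵥ p) ⬝ᵥ A⁻¹ *ᵥ x = p ⬝ᵥ x := by
  have h1 : A * A⁻¹ = 1 := mul_nonsing_inv A hA.det_pos.ne'.isUnit
  calc (A *ᵥ p) ⬝ᵥ A⁻¹ *ᵥ x = (p ᵥ* Aᵀ) ⬝ᵥ A⁻¹ *ᵥ x := by
        rw [← mulVec_transpose, transpose_transpose]
    _ = (p ᵥ* (Aᵀ * A⁻¹)) ⬝ᵥ x := by rw [dotProduct_mulVec, vecMul_vecMul]
    _ = p ⬝ᵥ x := by rw [aux_symm A hA, h1, vecMul_one]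

lemma aux_symm_dot {n : ℕ} (B : Matrix (Fin n) (Fin n) ℝ) (hB : Bᵀ = B) (x y : Fin n → ℝ) :
    x ⬝ᵥ B *ᵥ y = y ⬝ᵥ B *ᵥ x := by
  rw [dotProduct_mulVec, ← mulVec_transpose, dotProduct_comm, hB]

lemma aux_CS {n : ℕ} (A : Matrix (Fin n) (Fin n) ℝ) (hA : A.PosDef) (p x : Fin n → ℝ) :
    (p ⬝ᵥ x) ^ 2 ≤ (p ⬝ᵥ A *ᵥ p) * (x ⬝ᵥ A⁻¹ *ᵥ x) := by
  have hB : (A⁻¹).PosDef := hA.inv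
  set c := p ⬝ᵥ A *ᵥ p with hc
  set s := p ⬝ᵥ x with hs
  have key : ∀ t : ℝ, 0 ≤ c * (t * t) + (2 * s) * t + x ⬝ᵥ A⁻¹ *ᵥ x := by
    intro t
    have h0 := hB.posSemidef.dotProduct_mulVec_nonneg (x + t • (A *ᵥ p))
    rw [star_trivial] at h0
    have expand : (x + t • (A *ᵥ p)) ⬝ᵥ A⁻¹ *ᵥ (x + t • (A *ᵥ p))
        = c * (t * t) + (2 * s) * t + x ⬝ᵥ A⁻¹ *ᵥ x := by
      simp only [mulVec_add, mulVec_smul, add_dotProduct, dotProduct_add, smul_dotProduct,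
        dotProduct_smul, smul_eq_mul]
      have e1 : (A *ᵥ p) ⬝ᵥ A⁻¹ *ᵥ (A *ᵥ p) = c := aux_cross A hA p (A *ᵥ p)
      have e2 : (A *ᵥ p) ⬝ᵥ A⁻¹ *ᵥ x = s := aux_cross A hA p x
      have e3 : x ⬝ᵥ A⁻¹ *ᵥ (A *ᵥ p) = s := by
        rw [aux_symm_dot _ (aux_symm _ hB) x (A *ᵥ p)]; exact e2
      rw [e1, e2, e3]; ring
    rw [expand] at h0; exact_mod_cast h0
  have hd := discrim_le_zero key
  rw [discrim] at hd
  nlinarith [hd]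

lemma aux_vecMulVec_herm {n : ℕ} (p : Fin n → ℝ) : (vecMulVec p p).IsHermitian := by
  ext i j
  simp [vecMulVec, conjTranspose_apply, mul_comm]

/-- Positive definiteness of the deformed metric tensor: for `α, β > 0` and
`p ≠ 0`, the matrix `G = (1/β) h + (v/(αβ)) p pᵀ` is positive definite
if and only if `α + 2τ v > 0`, where `2τ = pᵀ A p` and `h = A⁻¹`. -/
theorem deformed_metric_posDef_iff
    {n : ℕ} (hn : 1 ≤ n) (A : Matrix (Fin n) (Fin n) ℝ) (hA : A.PosDef)
    (p : Fin n → ℝ) (hp : p ≠ 0) (α β v : ℝ) (hα : 0 < α) (hβ : 0 < β) :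
    ((1 / β) • A⁻¹ + (v / (α * β)) • vecMulVec p p).PosDef ↔
      0 < α + (p ⬝ᵥ A.mulVec p) * v := by
  have hB : (A⁻¹).PosDef := hA.inv
  have hαβ : 0 < α * β := mul_pos hα hβ
  have hc : 0 < p ⬝ᵥ A *ᵥ p := by
    have := hA.dotProduct_mulVec_pos hp; rwa [star_trivial] at this
  constructor
  · intro hG
    have hy : A *ᵥ p ≠ 0 := by
      intro h
      rw [h, dotProduct_zero] at hc; exact lt_irrefl 0 hc
    have h0 := hG.dotProduct_mulVec_pos hy
    rw [star_trivial, aux_quadform] at h0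
    rw [aux_cross A hA p (A *ᵥ p)] at h0
    have h0' : 0 < (1 / β * (p ⬝ᵥ A *ᵥ p)
        + v / (α * β) * (p ⬝ᵥ (A *ᵥ p)) * (p ⬝ᵥ (A *ᵥ p))) * (α * β) := mul_pos h0 hαβ
    have heq : (1 / β * (p ⬝ᵥ A *ᵥ p)
        + v / (α * β) * (p ⬝ᵥ (A *ᵥ p)) * (p ⬝ᵥ (A *ᵥ p))) * (α * β)
        = α * (p ⬝ᵥ A *ᵥ p) + v * (p ⬝ᵥ A *ᵥ p) * (p ⬝ᵥ A *ᵥ p) := by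
      field_simp
    rw [heq] at h0'
    by_contra hcon
    push_neg at hcon
    nlinarith [h0', hc, hcon]
  · intro h
    refine Matrix.PosDef.of_dotProduct_mulVec_pos ?_ ?_
    · show _ᴴ = _
      rw [conjTranspose_add, conjTranspose_smul, conjTranspose_smul, hB.1.eq,
        (aux_vecMulVec_herm p).eq, star_trivial, star_trivial]
    · intro x hx
      rw [star_trivial, aux_quadform]
      have hQ : 0 < x ⬝ᵥ A⁻¹ *ᵥ x := by
        have := hB.dotProduct_mulVec_pos hx; rwa [star_trivial] at this
      have hcs := aux_CS A hA p x
      have key : 0 < α * (x ⬝ᵥ A⁻¹ *ᵥ x) + v * (p ⬝ᵥ x) ^ 2 := by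
        rcases le_or_gt 0 v with hv | hv
        · nlinarith [mul_pos hα hQ, mul_nonneg hv (sq_nonneg (p ⬝ᵥ x))]
        · have h4 : v * ((p ⬝ᵥ A *ᵥ p) * (x ⬝ᵥ A⁻¹ *ᵥ x)) ≤ v * (p ⬝ᵥ x) ^ 2 :=
            mul_le_mul_of_nonpos_left hcs hv.le
          nlinarith [h4, mul_pos hQ h]
      have heq : 1 / β * (x ⬝ᵥ A⁻¹ *ᵥ x) + v / (α * β) * (p ⬝ᵥ x) * (p ⬝ᵥ x)
          = (α * (x ⬝ᵥ A⁻¹ *ᵥ x) + v * (p ⬝ᵥ x) ^ 2) / (α * β) := by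
        field_simp
      rw [heq]
      exact div_pos key hαβ
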